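/- Let h : ℂ → ℂ be analytic on 𝔻 with h'(z) ≠ 0 for all z ∈ 𝔻, let ζ ∈ ℂ with |ζ| = 1, let λ > 0 and r₁ ∈ [0,1), and suppose Re(ζ·h''(ηζ)/h'(ηζ)) < (2η − 2λ)/(1 − η²) for all η ∈ [r₁, 1). Then for all r, ρ with r₁ ≤ r ≤ ρ < 1, |h'(ρζ)| ≤ ((1+r)/(1+ρ))^{1+λ}·((1−ρ)/(1−r))^{λ−1}·|h'(rζ)|; in particular |h'(ρζ)| ≤ ((1−ρ)/(1−r))^{λ−1}·|h'(rζ)|. -/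

import Mathlib

open Complex Metric Set MeasureTheory Filter

lemma hasDerivAt_log_abs {f : ℝ → ℂ} {f' : ℂ} {x : ℝ} (hf : HasDerivAt f f' x)
    (h0 : f x ≠ 0) :
    HasDerivAt (fun t => Real.log ‖f t‖) ((f' / f x).re) x := by
  have hre : HasDerivAt (fun t => (f t).re) f'.re x :=
    (Complex.reCLM.hasFDerivAt.comp_hasDerivAt x hf)
  have him : HasDerivAt (fun t => (f t).im) f'.im x :=
    (Complex.imCLM.hasFDerivAt.comp_hasDerivAt x hf)
  have hN : HasDerivAt (fun t => (f t).re^2 + (f t).im^2)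
      (2*(f x).re*f'.re + 2*(f x).im*f'.im) x := by
    have := ((hre.pow 2).add (him.pow 2))
    refine this.congr_deriv ?_
    push_cast
    ring
  have hN0 : (f x).re^2 + (f x).im^2 ≠ 0 := by
    have := Complex.normSq_pos.mpr h0
    rw [Complex.normSq_apply] at this; nlinarith [this]
  have hlog := (Real.hasDerivAt_log hN0).comp x hN
  have heq : (fun t => Real.log ‖f t‖)
      = fun t => (1/2) * Real.log ((f t).re^2 + (f t).im^2) := by
    funext t
    rw [Complex.norm_def, Real.log_sqrt (Complex.normSq_nonneg _), Complex.normSq_apply]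
    ring_nf
  rw [heq]
  refine (hlog.const_mul (1/2 : ℝ)).congr_deriv ?_
  symm
  rw [Complex.div_re, Complex.normSq_apply,
    show (f x).re*(f x).re+(f x).im*(f x).im = (f x).re^2+(f x).im^2 by ring]
  field_simp

theorem stmt_16 (h : ℂ → ℂ) (ζ : ℂ) (lam r₁ : ℝ)
    (hh : AnalyticOnNhd ℂ h (Metric.ball (0:ℂ) 1))
    (hh' : ∀ z ∈ Metric.ball (0:ℂ) 1, deriv h z ≠ 0)
    (hζ : ‖ζ‖ = 1) (hlam : 0 < lam) (hr₁ : 0 ≤ r₁) (hr₁1 : r₁ < 1)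
    (hre : ∀ η : ℝ, r₁ ≤ η → η < 1 →
      (ζ * deriv (deriv h) ((η:ℂ)*ζ) / deriv h ((η:ℂ)*ζ)).re < (2*η - 2*lam)/(1 - η^2)) :
    ∀ r ρ : ℝ, r₁ ≤ r → r ≤ ρ → ρ < 1 →
      ‖deriv h ((ρ:ℂ)*ζ)‖
          ≤ ((1+r)/(1+ρ)) ^ (1+lam) * ((1-ρ)/(1-r)) ^ (lam-1) * ‖deriv h ((r:ℂ)*ζ)‖ ∧
      ‖deriv h ((ρ:ℂ)*ζ)‖
          ≤ ((1-ρ)/(1-r)) ^ (lam-1) * ‖deriv h ((r:ℂ)*ζ)‖ := by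
  intro r ρ hr hrρ hρ
  -- membership of points in the ball
  have hmem : ∀ η : ℝ, 0 ≤ η → η < 1 → (η:ℂ)*ζ ∈ Metric.ball (0:ℂ) 1 := by
    intro η h0 h1
    simp only [Metric.mem_ball, dist_zero_right, norm_mul,
      Complex.norm_real, Real.norm_eq_abs, hζ, mul_one]
    rwa [_root_.abs_of_nonneg h0]
  -- the key function K = G - F
  set K : ℝ → ℝ := fun η => Real.log ‖deriv h ((η:ℂ)*ζ)‖
      + (1+lam) * Real.log (1+η) - (lam-1) * Real.log (1-η) with hK
  -- HasDerivAt for K on [0,1)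
  have hKder : ∀ η : ℝ, 0 ≤ η → η < 1 →
      HasDerivAt K ((deriv (deriv h) ((η:ℂ)*ζ) * ζ / deriv h ((η:ℂ)*ζ)).re
        + (1+lam) * (1+η)⁻¹ - (lam-1) * (-(1-η)⁻¹)) η := by
    intro η h0 h1
    have hm := hmem η h0 h1
    have hfd : HasDerivAt (fun t : ℝ => deriv h ((t:ℂ)*ζ))
        (deriv (deriv h) ((η:ℂ)*ζ) * ζ) η := by
      have h1' : HasDerivAt (deriv h) (deriv (deriv h) ((η:ℂ)*ζ)) ((η:ℂ)*ζ) :=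
        ((hh.deriv _ hm).differentiableAt).hasDerivAt
      have h2' : HasDerivAt (fun w : ℂ => w*ζ) ζ (η:ℂ) := by
        simpa using (hasDerivAt_id (η:ℂ)).mul_const ζ
      exact (h1'.comp (η:ℂ) h2').comp_ofReal
    have hG := hasDerivAt_log_abs hfd (hh' _ hm)
    have h1p : (1:ℝ)+η ≠ 0 := by linarith
    have h1m : (1:ℝ)-η ≠ 0 := by linarith
    have hF1 : HasDerivAt (fun t : ℝ => (1+lam) * Real.log (1+t)) ((1+lam) * (1+η)⁻¹) η := by
      have inner : HasDerivAt (fun t : ℝ => 1+t) 1 η := (hasDerivAt_id η).const_add 1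
      simpa using ((Real.hasDerivAt_log h1p).comp η inner).const_mul (1+lam)
    have hF2 : HasDerivAt (fun t : ℝ => (lam-1) * Real.log (1-t)) ((lam-1) * (-(1-η)⁻¹)) η := by
      have inner : HasDerivAt (fun t : ℝ => 1-t) (-1) η := (hasDerivAt_id η).const_sub 1
      have := ((Real.hasDerivAt_log h1m).comp η inner).const_mul (lam-1)
      refine this.congr_deriv ?_
      ring
    exact (hG.add hF1).sub hF2
  -- K is antitone on [r₁, 1)
  have hanti : AntitoneOn K (Set.Ico r₁ 1) := by
    apply antitoneOn_of_deriv_nonpos (convex_Ico r₁ 1)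
    · intro x hx
      exact ((hKder x (le_trans hr₁ hx.1) hx.2).continuousAt).continuousWithinAt
    · intro x hx
      rw [interior_Ico] at hx
      exact (hKder x (le_trans hr₁ hx.1.le) hx.2).differentiableAt.differentiableWithinAt
    · intro x hx
      rw [interior_Ico] at hx
      have hd := (hKder x (le_trans hr₁ hx.1.le) hx.2).deriv
      rw [hd]
      have hlt := hre x hx.1.le hx.2
      have h1p : (0:ℝ) < 1+x := by linarith [le_trans hr₁ hx.1.le]
      have h1m : (0:ℝ) < 1-x := by linarith [hx.2]
      rw [mul_comm ζ _] at hlt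
      have heq : (2*x - 2*lam)/(1 - x^2) = -((1+lam) * (1+x)⁻¹ - (lam-1) * (-(1-x)⁻¹)) := by
        rw [show (1:ℝ) - x^2 = (1+x)*(1-x) by ring]
        field_simp
        ring
      rw [heq] at hlt
      linarith
  -- positivity facts
  have h0r : 0 ≤ r := le_trans hr₁ hr
  have hr1 : r < 1 := lt_of_le_of_lt hrρ hρ
  have h0ρ : 0 ≤ ρ := le_trans h0r hrρ
  have h1pr : (0:ℝ) < 1+r := by linarith
  have h1pρ : (0:ℝ) < 1+ρ := by linarith
  have h1mr : (0:ℝ) < 1-r := by linarith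
  have h1mρ : (0:ℝ) < 1-ρ := by linarith
  have hA : (0:ℝ) < (1+r)/(1+ρ) := div_pos h1pr h1pρ
  have hB : (0:ℝ) < (1-ρ)/(1-r) := div_pos h1mρ h1mr
  have habsρ : 0 < ‖deriv h ((ρ:ℂ)*ζ)‖ :=
    norm_pos_iff.mpr (hh' _ (hmem ρ h0ρ hρ))
  have habsr : 0 < ‖deriv h ((r:ℂ)*ζ)‖ :=
    norm_pos_iff.mpr (hh' _ (hmem r h0r hr1))
  -- the antitone inequality
  have hKle : K ρ ≤ K r := hanti ⟨hr, hr1⟩ ⟨le_trans hr hrρ, hρ⟩ hrρ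
  -- first inequality
  have main : ‖deriv h ((ρ:ℂ)*ζ)‖
      ≤ ((1+r)/(1+ρ)) ^ (1+lam) * ((1-ρ)/(1-r)) ^ (lam-1) * ‖deriv h ((r:ℂ)*ζ)‖ := by
    rw [← Real.log_le_log_iff habsρ (by positivity)]
    rw [Real.log_mul (by positivity) habsr.ne', Real.log_mul (by positivity) (by positivity),
      Real.log_rpow hA, Real.log_rpow hB, Real.log_div h1pr.ne' h1pρ.ne',
      Real.log_div h1mρ.ne' h1mr.ne']
    simp only [hK] at hKle
    nlinarith [hKle]
  refine ⟨main, le_trans main ?_⟩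
  have hA1 : ((1+r)/(1+ρ)) ^ (1+lam) ≤ 1 := by
    apply Real.rpow_le_one hA.le _ (by linarith)
    rw [div_le_one h1pρ]
    linarith
  calc ((1+r)/(1+ρ)) ^ (1+lam) * ((1-ρ)/(1-r)) ^ (lam-1) * ‖deriv h ((r:ℂ)*ζ)‖
      ≤ 1 * ((1-ρ)/(1-r)) ^ (lam-1) * ‖deriv h ((r:ℂ)*ζ)‖ := by
        apply mul_le_mul_of_nonneg_right _ habsr.le
        exact mul_le_mul_of_nonneg_right hA1 (Real.rpow_nonneg hB.le _)
    _ = ((1-ρ)/(1-r)) ^ (lam-1) * ‖deriv h ((r:ℂ)*ζ)‖ := by ring
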